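/- Let |ξ⟩ be a unit vector on X⊗Y such that F(|Φ⟩⟨Φ|, ξ^Y) ≥ 1-ε for some fixed pure state |Φ⟩ on Y, where ξ^Y = Tr_X |ξ⟩⟨ξ|. Then F(|ξ⟩⟨ξ|, ξ^X ⊗ ξ^Y) ≥ (1-ε)³ ≥ 1 - 3ε. -/

import Mathlib

open scoped Kronecker ComplexOrder
open scoped Classical
open Matrix

noncomputable section

/-- Square root of a positive semidefinite matrix (junk value `0` otherwise). -/
noncomputable def psqrt {n : Type*} [Fintype n] [DecidableEq n] (A : Matrix n n ℂ) :
    Matrix n n ℂ :=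
  if h : A.PosSemidef then
    (h.1.eigenvectorUnitary : Matrix n n ℂ) * diagonal ((↑) ∘ (√·) ∘ h.1.eigenvalues) *
      (star h.1.eigenvectorUnitary : Matrix n n ℂ) else 0

/-- Schatten 1-norm (trace norm) `‖A‖₁ = Tr √(AᴴA)`. -/
noncomputable def traceNorm {n : Type*} [Fintype n] [DecidableEq n] (A : Matrix n n ℂ) : ℝ :=
  ((psqrt (Aᴴ * A)).trace).re

/-- Fidelity `F(ρ,ξ) = ‖√ρ √ξ‖₁ = Tr √(√ρ ξ √ρ)`. -/
noncomputable def fidelity {n : Type*} [Fintype n] [DecidableEq n] (ρ ξ : Matrix n n ℂ) : ℝ :=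
  traceNorm (psqrt ρ * psqrt ξ)

/-- Von Neumann entropy `S(ρ) = -Tr ρ log₂ ρ`, via eigenvalues (junk `0` if not Hermitian). -/
noncomputable def vnEntropy {n : Type*} [Fintype n] [DecidableEq n] (ρ : Matrix n n ℂ) : ℝ :=
  if h : ρ.IsHermitian then -∑ i, (h.eigenvalues i) * Real.logb 2 (h.eigenvalues i) else 0

/-- A density matrix: positive semidefinite with unit trace. -/
def IsDensity {n : Type*} [Fintype n] [DecidableEq n] (ρ : Matrix n n ℂ) : Prop :=
  ρ.PosSemidef ∧ ρ.trace = 1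

/-- Partial trace over the second (right) tensor factor. -/
def ptraceRight {a b : Type*} [Fintype b] (M : Matrix (a × b) (a × b) ℂ) : Matrix a a ℂ :=
  Matrix.of fun i j => ∑ k, M (i, k) (j, k)

/-- Partial trace over the first (left) tensor factor. -/
def ptraceLeft {a b : Type*} [Fintype a] (M : Matrix (a × b) (a × b) ℂ) : Matrix b b ℂ :=
  Matrix.of fun i j => ∑ k, M (k, i) (k, j)

/-- Quantum mutual information `I(A:B) = S(A) + S(B) - S(AB)`. -/
noncomputable def mutualInfo {a b : Type*} [Fintype a] [DecidableEq a] [Fintype b] [DecidableEq b]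
    (ρ : Matrix (a × b) (a × b) ℂ) : ℝ :=
  vnEntropy (ptraceRight ρ) + vnEntropy (ptraceLeft ρ) - vnEntropy ρ

/-- Outer product `|ψ⟩⟨ψ|` of a vector. -/
def vecOuter {n : Type*} (ψ : n → ℂ) : Matrix n n ℂ :=
  Matrix.of fun i j => ψ i * star (ψ j)

/-- Binary (Shannon) entropy, base 2. -/
noncomputable def binEnt (x : ℝ) : ℝ :=
  -(x * Real.logb 2 x) - (1 - x) * Real.logb 2 (1 - x)

section AuxLemmas
set_option linter.unusedSectionVars false

variable {n : Type*} [Fintype n] [DecidableEq n]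

open scoped MatrixOrder in
/-- Square root of a positive semidefinite matrix, via the continuous functional calculus. -/
noncomputable def Matrix.PosSemidef.sqrt {A : Matrix n n ℂ} (_hA : A.PosSemidef) :
    Matrix n n ℂ :=
  CFC.sqrt A

open scoped MatrixOrder in
lemma Matrix.PosSemidef.posSemidef_sqrt {A : Matrix n n ℂ} (hA : A.PosSemidef) :
    hA.sqrt.PosSemidef :=
  Matrix.nonneg_iff_posSemidef.mp (CFC.sqrt_nonneg A)

open scoped MatrixOrder in
lemma Matrix.PosSemidef.sqrt_mul_self {A : Matrix n n ℂ} (hA : A.PosSemidef) :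
    hA.sqrt * hA.sqrt = A :=
  CFC.sqrt_mul_sqrt_self A (Matrix.nonneg_iff_posSemidef.mpr hA)

open scoped MatrixOrder in
lemma Matrix.PosSemidef.eq_sqrt_of_sq_eq {B : Matrix n n ℂ} (hB : B.PosSemidef)
    {A : Matrix n n ℂ} (hA : A.PosSemidef) (h : B ^ 2 = A) : B = hA.sqrt :=
  ((CFC.sqrt_eq_iff A B (Matrix.nonneg_iff_posSemidef.mpr hA)
    (Matrix.nonneg_iff_posSemidef.mpr hB)).mpr (by rw [← pow_two]; exact h)).symm

open scoped MatrixOrder in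
lemma psqrt_of_posSemidef {A : Matrix n n ℂ} (hA : A.PosSemidef) : psqrt A = hA.sqrt := by
  rw [psqrt, dif_pos hA, Matrix.PosSemidef.sqrt, CFC.sqrt_eq_cfc,
    cfc_nnreal_eq_real _ A (Matrix.nonneg_iff_posSemidef.mpr hA), hA.1.cfc_eq]
  simp only [IsHermitian.cfc, Unitary.conjStarAlgAut_apply, Real.coe_sqrt, Real.coe_toNNReal']
  congr 3
  funext i
  simp [max_eq_left (hA.eigenvalues_nonneg i)]


lemma vecOuter_conjTranspose (ψ : n → ℂ) : (vecOuter ψ)ᴴ = vecOuter ψ := by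
  ext i j; simp [vecOuter, conjTranspose_apply, mul_comm]

lemma vecOuter_posSemidef (ψ : n → ℂ) : (vecOuter ψ).PosSemidef := by
  refine Matrix.PosSemidef.of_dotProduct_mulVec_nonneg (vecOuter_conjTranspose ψ) fun x => ?_
  have : dotProduct (star x) ((vecOuter ψ) *ᵥ x)
      = star (∑ j, star (ψ j) * x j) * (∑ j, star (ψ j) * x j) := by
    simp only [dotProduct, mulVec, vecOuter, of_apply, star_sum, StarMul.star_mul, star_star,
      Finset.mul_sum, Finset.sum_mul, Pi.star_apply]
    rw [Finset.sum_comm]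
    exact Finset.sum_congr rfl fun i _ => Finset.sum_congr rfl fun j _ => by ring
  rw [this]
  exact star_mul_self_nonneg _

lemma vecOuter_mul_self (ψ : n → ℂ) :
    vecOuter ψ * vecOuter ψ = (∑ j, star (ψ j) * ψ j) • vecOuter ψ := by
  ext i j
  simp only [Matrix.mul_apply, vecOuter, of_apply, Matrix.smul_apply, smul_eq_mul, Finset.sum_mul]
  exact Finset.sum_congr rfl fun k _ => by ring


lemma psqrt_vecOuter_unit {ψ : n → ℂ} (hψ : ∑ j, star (ψ j) * ψ j = 1) :
    psqrt (vecOuter ψ) = vecOuter ψ := by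
  rw [psqrt_of_posSemidef (vecOuter_posSemidef ψ)]
  refine ((vecOuter_posSemidef ψ).eq_sqrt_of_sq_eq (vecOuter_posSemidef ψ) ?_).symm
  rw [pow_two, vecOuter_mul_self, hψ, one_smul]

lemma smul_posSemidef {r : ℝ} (hr : 0 ≤ r) {A : Matrix n n ℂ} (hA : A.PosSemidef) :
    ((r : ℂ) • A).PosSemidef := by
  refine Matrix.PosSemidef.of_dotProduct_mulVec_nonneg ?_ fun x => ?_
  · unfold Matrix.IsHermitian
    rw [conjTranspose_smul, hA.1]
    simp
  · have h := hA.dotProduct_mulVec_nonneg x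
    have : dotProduct (star x) (((r : ℂ) • A) *ᵥ x)
        = (r : ℂ) * dotProduct (star x) (A *ᵥ x) := by
      simp [smul_mulVec, dotProduct_smul, smul_eq_mul]
    rw [this]
    have hr' : (0 : ℂ) ≤ (r : ℂ) := by
      rw [Complex.le_def]; simp [hr]
    exact mul_nonneg hr' h

lemma vecOuter_trace (v : n → ℂ) :
    (vecOuter v).trace = ((∑ i, Complex.normSq (v i) : ℝ) : ℂ) := by
  simp only [Matrix.trace, Matrix.diag, vecOuter, of_apply]
  push_cast
  exact Finset.sum_congr rfl fun i _ => (Complex.mul_conj (v i)).symm ▸ rfl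

lemma psqrt_vecOuter (v : n → ℂ) :
    psqrt (vecOuter v) =
      (((Real.sqrt (∑ i, Complex.normSq (v i)))⁻¹ : ℝ) : ℂ) • vecOuter v := by
  set s : ℝ := ∑ i, Complex.normSq (v i) with hs
  have hs0 : 0 ≤ s := Finset.sum_nonneg fun i _ => Complex.normSq_nonneg _
  have hsum : (∑ j, star (v j) * v j) = (s : ℂ) := by
    rw [hs]
    push_cast
    exact Finset.sum_congr rfl fun i _ => by
      rw [Complex.star_def, mul_comm, Complex.mul_conj]
  rcases eq_or_lt_of_le hs0 with h0 | hpos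
  · have hv : v = 0 := by
      funext i
      have := (Finset.sum_eq_zero_iff_of_nonneg (fun i _ => Complex.normSq_nonneg (v i))).mp h0.symm
      exact Complex.normSq_eq_zero.mp (this i (Finset.mem_univ i))
    have hO : vecOuter v = 0 := by ext i j; simp [vecOuter, hv]
    rw [hO, smul_zero, psqrt_of_posSemidef Matrix.PosSemidef.zero]
    exact ((Matrix.PosSemidef.zero).eq_sqrt_of_sq_eq Matrix.PosSemidef.zero (by simp)).symm
  · rw [psqrt_of_posSemidef (vecOuter_posSemidef v)]
    have hps : ((((Real.sqrt s)⁻¹ : ℝ) : ℂ) • vecOuter v).PosSemidef :=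
      smul_posSemidef (by positivity) (vecOuter_posSemidef v)
    refine (Matrix.PosSemidef.eq_sqrt_of_sq_eq hps (vecOuter_posSemidef v) ?_).symm
    rw [pow_two, Matrix.smul_mul, Matrix.mul_smul, smul_smul, vecOuter_mul_self, hsum,
      smul_smul]
    have : ((((Real.sqrt s)⁻¹ : ℝ)) : ℂ) * ((((Real.sqrt s)⁻¹ : ℝ)) : ℂ) * (s : ℂ) = 1 := by
      norm_cast
      rw [← mul_inv, Real.mul_self_sqrt hs0]
      exact inv_mul_cancel₀ (ne_of_gt hpos)
    rw [this, one_smul]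

lemma trace_psqrt_vecOuter (v : n → ℂ) :
    ((psqrt (vecOuter v)).trace).re = Real.sqrt (∑ i, Complex.normSq (v i)) := by
  set s : ℝ := ∑ i, Complex.normSq (v i) with hs
  have hs0 : 0 ≤ s := Finset.sum_nonneg fun i _ => Complex.normSq_nonneg _
  rw [psqrt_vecOuter, Matrix.trace_smul, vecOuter_trace]
  rw [smul_eq_mul, ← Complex.ofReal_mul, Complex.ofReal_re, ← hs]
  rcases eq_or_lt_of_le hs0 with h0 | hpos
  · rw [← h0]; simp
  · have h := Real.sqrt_ne_zero'.mpr hpos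
    field_simp
    exact (Real.sq_sqrt hs0).symm

lemma mul_vecOuter_mul_conjTranspose (B : Matrix n n ℂ) (ψ : n → ℂ) :
    B * vecOuter ψ * Bᴴ = vecOuter (B *ᵥ ψ) := by
  ext i j
  simp only [Matrix.mul_apply, vecOuter, of_apply, conjTranspose_apply, mulVec, dotProduct,
    Finset.sum_mul, Finset.mul_sum, star_sum, StarMul.star_mul, star_star]
  rw [Finset.sum_comm]
  conv_rhs => rw [Finset.sum_comm]
  exact Finset.sum_congr rfl fun k _ => Finset.sum_congr rfl fun l _ => by ring

lemma dotProduct_star_self_eq (v : n → ℂ) :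
    dotProduct (star v) v = ((∑ i, Complex.normSq (v i) : ℝ) : ℂ) := by
  push_cast
  simp only [dotProduct, Pi.star_apply]
  exact Finset.sum_congr rfl fun i _ => by
    rw [Complex.star_def, mul_comm, Complex.mul_conj]

lemma star_mulVec_dotProduct (A : Matrix n n ℂ) (x y : n → ℂ) :
    dotProduct (star (A *ᵥ x)) y = dotProduct (star x) (Aᴴ *ᵥ y) := by
  rw [star_mulVec, ← Matrix.dotProduct_mulVec]

lemma fidelity_pure_left {ψ : n → ℂ} (hψ : ∑ j, star (ψ j) * ψ j = 1)
    {σ : Matrix n n ℂ} (hσ : σ.PosSemidef) :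
    fidelity (vecOuter ψ) σ = Real.sqrt ((dotProduct (star ψ) (σ *ᵥ ψ)).re) := by
  have hS : (psqrt σ).PosSemidef := by
    rw [psqrt_of_posSemidef hσ]; exact hσ.posSemidef_sqrt
  have hSH : (psqrt σ)ᴴ = psqrt σ := hS.1
  have hS2 : psqrt σ * psqrt σ = σ := by
    rw [psqrt_of_posSemidef hσ]; exact hσ.sqrt_mul_self
  unfold fidelity traceNorm
  rw [psqrt_vecOuter_unit hψ]
  have hM : (vecOuter ψ * psqrt σ)ᴴ * (vecOuter ψ * psqrt σ)
      = vecOuter ((psqrt σ) *ᵥ ψ) := by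
    rw [conjTranspose_mul, vecOuter_conjTranspose, hSH]
    calc psqrt σ * vecOuter ψ * (vecOuter ψ * psqrt σ)
        = psqrt σ * (vecOuter ψ * vecOuter ψ) * psqrt σ := by
          simp only [Matrix.mul_assoc]
      _ = psqrt σ * vecOuter ψ * (psqrt σ)ᴴ := by
          rw [vecOuter_mul_self, hψ, one_smul, hSH, Matrix.mul_assoc]
      _ = vecOuter ((psqrt σ) *ᵥ ψ) := mul_vecOuter_mul_conjTranspose _ _
  rw [hM, trace_psqrt_vecOuter]
  congr 1
  have : ((∑ i, Complex.normSq ((psqrt σ *ᵥ ψ) i) : ℝ) : ℂ)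
      = dotProduct (star ψ) (σ *ᵥ ψ) := by
    rw [← dotProduct_star_self_eq, star_mulVec_dotProduct, hSH, Matrix.mulVec_mulVec, hS2]
  have h2 := congrArg Complex.re this
  rwa [Complex.ofReal_re] at h2

section kron
variable {m : Type*} [Fintype m] [DecidableEq m]

lemma kron_conjTranspose (A : Matrix n n ℂ) (B : Matrix m m ℂ) :
    (A ⊗ₖ B)ᴴ = Aᴴ ⊗ₖ Bᴴ := by
  ext ⟨i, j⟩ ⟨k, l⟩
  simp [conjTranspose_apply, kroneckerMap_apply, mul_comm]

lemma kron_posSemidef {A : Matrix n n ℂ} {B : Matrix m m ℂ}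
    (hA : A.PosSemidef) (hB : B.PosSemidef) : (A ⊗ₖ B).PosSemidef := by
  have h : A ⊗ₖ B = (hA.sqrt ⊗ₖ hB.sqrt)ᴴ * (hA.sqrt ⊗ₖ hB.sqrt) := by
    rw [kron_conjTranspose, hA.posSemidef_sqrt.1, hB.posSemidef_sqrt.1,
      ← Matrix.mul_kronecker_mul, hA.sqrt_mul_self, hB.sqrt_mul_self]
  rw [h]
  exact posSemidef_conjTranspose_mul_self _
end kron

lemma psd_trace_re_nonneg {M : Matrix n n ℂ} (hM : M.PosSemidef) :
    0 ≤ M.trace.re := by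
  have h : ∀ i, 0 ≤ (M i i).re := by
    intro i
    have h := hM.re_dotProduct_nonneg (Pi.single i 1)
    simpa [dotProduct, mulVec, Pi.single_apply, Finset.mul_sum] using h
  rw [Matrix.trace, Complex.re_sum]
  exact Finset.sum_nonneg fun i _ => h i

lemma trace_mul_psd_re_nonneg {A B : Matrix n n ℂ} (hA : A.PosSemidef) (hB : B.PosSemidef) :
    0 ≤ (A * B).trace.re := by
  have h1 : A * B = hA.sqrt * (hA.sqrt * B) := by
    rw [← Matrix.mul_assoc, hA.sqrt_mul_self]
  rw [h1, Matrix.trace_mul_comm, Matrix.mul_assoc]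
  have h2 : (hA.sqrt * B * hA.sqrt).PosSemidef := by
    have := hB.conjTranspose_mul_mul_same (B := hA.sqrt)
    rwa [hA.posSemidef_sqrt.1] at this
  rw [← Matrix.mul_assoc]
  exact psd_trace_re_nonneg h2

lemma trace_mul_vecOuter (M : Matrix n n ℂ) (Φ : n → ℂ) :
    (M * vecOuter Φ).trace = dotProduct (star Φ) (M *ᵥ Φ) := by
  simp only [Matrix.trace, Matrix.diag, Matrix.mul_apply, vecOuter, of_apply, dotProduct,
    mulVec, Pi.star_apply, Finset.mul_sum]
  exact Finset.sum_congr rfl fun i _ => Finset.sum_congr rfl fun j _ => by ring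

lemma cs_normSq (u v : n → ℂ) :
    Complex.normSq (dotProduct (star u) v)
      ≤ (dotProduct (star u) u).re * (dotProduct (star v) v).re := by
  set u' : EuclideanSpace ℂ n := (WithLp.equiv 2 (n → ℂ)).symm u with hu'
  set v' : EuclideanSpace ℂ n := (WithLp.equiv 2 (n → ℂ)).symm v with hv'
  have key : ∀ w : n → ℂ,
      (dotProduct (star w) w).re = ‖(WithLp.equiv 2 (n → ℂ)).symm w‖ ^ 2 := by
    intro w
    rw [dotProduct_star_self_eq, Complex.ofReal_re, EuclideanSpace.norm_eq,
      Real.sq_sqrt (Finset.sum_nonneg fun i _ => sq_nonneg _)]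
    refine Finset.sum_congr rfl fun i _ => ?_
    rw [WithLp.equiv_symm_apply, PiLp.toLp_apply, Complex.sq_norm]
  have hinner : (inner ℂ u' v' : ℂ) = dotProduct (star u) v := by
    simp only [PiLp.inner_apply, RCLike.inner_apply, hu', hv', WithLp.equiv_symm_apply, PiLp.toLp_apply,
      dotProduct, Pi.star_apply, Complex.star_def]
    exact Finset.sum_congr rfl fun i _ => mul_comm _ _
  have h := norm_inner_le_norm (𝕜 := ℂ) u' v'
  have h2 : ‖(inner ℂ u' v' : ℂ)‖ ^ 2 ≤ (‖u'‖ * ‖v'‖) ^ 2 :=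
    pow_le_pow_left₀ (norm_nonneg _) h 2
  rw [hinner] at h2
  have habs : Complex.normSq (dotProduct (star u) v) = ‖dotProduct (star u) v‖ ^ 2 := by
    rw [Complex.sq_norm]
  rw [habs, key u, key v, ← hu', ← hv']
  calc ‖dotProduct (star u) v‖ ^ 2 ≤ (‖u'‖ * ‖v'‖) ^ 2 := h2
    _ = ‖u'‖ ^ 2 * ‖v'‖ ^ 2 := by ring

lemma vecOuter_quadform (ψ x : n → ℂ) :
    dotProduct (star x) ((vecOuter ψ) *ᵥ x)
      = star (dotProduct (star ψ) x) * (dotProduct (star ψ) x) := by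
  simp only [dotProduct, mulVec, vecOuter, of_apply, star_sum, StarMul.star_mul, star_star,
    Finset.mul_sum, Finset.sum_mul, Pi.star_apply]
  rw [Finset.sum_comm]
  exact Finset.sum_congr rfl fun i _ => Finset.sum_congr rfl fun j _ => by ring

lemma one_sub_vecOuter_posSemidef {Φ : n → ℂ} (hΦ : ∑ j, star (Φ j) * Φ j = 1) :
    (1 - vecOuter Φ).PosSemidef := by
  refine Matrix.PosSemidef.of_dotProduct_mulVec_nonneg (Matrix.isHermitian_one.sub (vecOuter_posSemidef Φ).1) fun x => ?_
  rw [Matrix.sub_mulVec, dotProduct_sub, Matrix.one_mulVec, vecOuter_quadform]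
  have hc : star (dotProduct (star Φ) x) * (dotProduct (star Φ) x)
      = ((Complex.normSq (dotProduct (star Φ) x) : ℝ) : ℂ) := by
    rw [Complex.star_def, mul_comm, Complex.mul_conj]
  rw [hc, dotProduct_star_self_eq, ← Complex.ofReal_sub]
  rw [Complex.le_def]
  constructor
  · simp only [Complex.ofReal_re, Complex.zero_re]
    have h := cs_normSq Φ x
    have hΦ1 : (dotProduct (star Φ) Φ).re = 1 := by
      have : dotProduct (star Φ) Φ = 1 := hΦ
      rw [this, Complex.one_re]
    rw [hΦ1, one_mul, dotProduct_star_self_eq, Complex.ofReal_re] at h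
    linarith
  · simp

lemma quadform_le_trace {M : Matrix n n ℂ} (hM : M.PosSemidef)
    {Φ : n → ℂ} (hΦ : ∑ j, star (Φ j) * Φ j = 1) :
    (dotProduct (star Φ) (M *ᵥ Φ)).re ≤ M.trace.re := by
  have h1 : 0 ≤ (M * (1 - vecOuter Φ)).trace.re :=
    trace_mul_psd_re_nonneg hM (one_sub_vecOuter_posSemidef hΦ)
  rw [Matrix.mul_sub, Matrix.mul_one, Matrix.trace_sub, Complex.sub_re,
    trace_mul_vecOuter] at h1
  linarith

lemma trace_cube_ge_quadform_cube {σ : Matrix n n ℂ} (hσ : σ.PosSemidef)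
    {Φ : n → ℂ} (hΦ : ∑ j, star (Φ j) * Φ j = 1) :
    ((dotProduct (star Φ) (σ *ᵥ Φ)).re) ^ 3 ≤ ((σ * σ * σ).trace).re := by
  obtain ⟨S, hSH, hS2⟩ : ∃ S : Matrix n n ℂ, Sᴴ = S ∧ S * S = σ :=
    ⟨hσ.sqrt, hσ.posSemidef_sqrt.1, hσ.sqrt_mul_self⟩
  have hσH : σᴴ = σ := hσ.1
  have hσ2 : (σ * σ).PosSemidef := by
    rw [show σ * σ = σᴴ * σ by rw [hσH]]
    exact posSemidef_conjTranspose_mul_self σ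
  have hσ3 : (σ * σ * σ).PosSemidef := by
    have := hσ.conjTranspose_mul_mul_same (B := σ)
    rwa [hσH] at this
  set t := (dotProduct (star Φ) (σ *ᵥ Φ)).re with ht
  set r2 := (dotProduct (star Φ) ((σ * σ) *ᵥ Φ)).re with hr2
  set q3 := (dotProduct (star Φ) ((σ * σ * σ) *ᵥ Φ)).re with hq3
  have hΦ1 : (dotProduct (star Φ) Φ).re = 1 := by
    have : dotProduct (star Φ) Φ = 1 := hΦ
    rw [this, Complex.one_re]
  have ht0 : 0 ≤ t := hσ.re_dotProduct_nonneg Φ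
  have hq30 : 0 ≤ q3 := hσ3.re_dotProduct_nonneg Φ
  have hr20 : 0 ≤ r2 := hσ2.re_dotProduct_nonneg Φ
  -- step 1 : t^2 ≤ r2
  have step1 : t ^ 2 ≤ r2 := by
    have h := cs_normSq Φ (σ *ᵥ Φ)
    have h2 : dotProduct (star (σ *ᵥ Φ)) (σ *ᵥ Φ)
        = dotProduct (star Φ) ((σ * σ) *ᵥ Φ) := by
      rw [star_mulVec_dotProduct, Matrix.mulVec_mulVec, hσH]
    rw [h2, hΦ1, one_mul] at h
    have h3 : t ^ 2 ≤ Complex.normSq (dotProduct (star Φ) (σ *ᵥ Φ)) := by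
      rw [ht, Complex.normSq_apply, pow_two]
      nlinarith [sq_nonneg (dotProduct (star Φ) (σ *ᵥ Φ)).im]
    linarith
  -- step 2 : r2^2 ≤ t * q3
  have step2 : r2 ^ 2 ≤ t * q3 := by
    set u := S *ᵥ Φ with hu
    set w := σ *ᵥ (S *ᵥ Φ) with hw
    have h := cs_normSq u w
    have e1 : dotProduct (star u) w = dotProduct (star Φ) ((σ * σ) *ᵥ Φ) := by
      rw [hu, hw, star_mulVec_dotProduct, Matrix.mulVec_mulVec, Matrix.mulVec_mulVec, hSH]
      congr 1
      rw [← hS2]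
      simp only [← Matrix.mul_assoc]
    have e2 : dotProduct (star u) u = dotProduct (star Φ) (σ *ᵥ Φ) := by
      rw [hu, star_mulVec_dotProduct, Matrix.mulVec_mulVec, hSH, hS2]
    have e3 : dotProduct (star w) w = dotProduct (star Φ) ((σ * σ * σ) *ᵥ Φ) := by
      rw [hw, star_mulVec_dotProduct]
      rw [show σᴴ *ᵥ (σ *ᵥ (S *ᵥ Φ)) = (σᴴ * σ * S) *ᵥ Φ by
        rw [Matrix.mulVec_mulVec, Matrix.mulVec_mulVec]]
      rw [star_mulVec_dotProduct, Matrix.mulVec_mulVec, hSH, hσH]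
      congr 2
      rw [← hS2]
      simp only [← Matrix.mul_assoc]
    rw [e1, e2, e3] at h
    have h3 : r2 ^ 2 ≤ Complex.normSq (dotProduct (star Φ) ((σ * σ) *ᵥ Φ)) := by
      rw [hr2, Complex.normSq_apply, pow_two]
      nlinarith [sq_nonneg (dotProduct (star Φ) ((σ * σ) *ᵥ Φ)).im]
    linarith
  -- step 3 : q3 ≤ trace
  have step3 : q3 ≤ ((σ * σ * σ).trace).re := quadform_le_trace hσ3 hΦ
  -- combine
  rcases eq_or_lt_of_le ht0 with h0 | hpos
  · have : t = 0 := h0.symm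
    rw [this]
    simpa using le_trans hq30 step3
  · have hq3t : t ^ 3 ≤ q3 := by
      have h4 : t ^ 4 ≤ t * q3 := by nlinarith
      nlinarith
    linarith

section marginals
variable {x y : Type*} [Fintype x] [DecidableEq x] [Fintype y] [DecidableEq y]

lemma ptraceRight_vecOuter (ξ : x × y → ℂ) :
    ptraceRight (vecOuter ξ) =
      (Matrix.of fun a b => ξ (a, b)) * (Matrix.of fun a b => ξ (a, b))ᴴ := by
  ext a a'
  simp [ptraceRight, vecOuter, Matrix.mul_apply, conjTranspose_apply]

lemma ptraceLeft_vecOuter (ξ : x × y → ℂ) :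
    ptraceLeft (vecOuter ξ) =
      ((Matrix.of fun a b => ξ (a, b))ᴴ * (Matrix.of fun a b => ξ (a, b)))ᵀ := by
  ext b b'
  simp only [ptraceLeft, vecOuter, of_apply, transpose_apply, Matrix.mul_apply,
    conjTranspose_apply, of_apply]
  exact Finset.sum_congr rfl fun a _ => by ring

lemma quadform_kron (M : Matrix x x ℂ) (N : Matrix y y ℂ) (ξ : x × y → ℂ) :
    dotProduct (star ξ) ((M ⊗ₖ N) *ᵥ ξ)
      = ((Matrix.of fun a b => ξ (a, b))ᴴ * M * (Matrix.of fun a b => ξ (a, b)) * Nᵀ).trace := by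
  calc dotProduct (star ξ) ((M ⊗ₖ N) *ᵥ ξ)
      = ∑ a, ∑ b, ∑ a', ∑ b',
          star (ξ (a, b)) * (M a a' * N b b' * ξ (a', b')) := by
        simp only [dotProduct, mulVec, kroneckerMap_apply, Pi.star_apply,
          Fintype.sum_prod_type, Finset.mul_sum]
    _ = ∑ b, ∑ a, ∑ a', ∑ b',
          star (ξ (a, b)) * (M a a' * N b b' * ξ (a', b')) :=
        Finset.sum_comm
    _ = ∑ b, ∑ a', ∑ a, ∑ b',
          star (ξ (a, b)) * (M a a' * N b b' * ξ (a', b')) :=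
        Finset.sum_congr rfl fun b _ => Finset.sum_comm
    _ = ∑ b, ∑ a', ∑ b', ∑ a,
          star (ξ (a, b)) * (M a a' * N b b' * ξ (a', b')) :=
        Finset.sum_congr rfl fun b _ => Finset.sum_congr rfl fun a' _ => Finset.sum_comm
    _ = ∑ b, ∑ b', ∑ a', ∑ a,
          star (ξ (a, b)) * (M a a' * N b b' * ξ (a', b')) :=
        Finset.sum_congr rfl fun b _ => Finset.sum_comm
    _ = ((Matrix.of fun a b => ξ (a, b))ᴴ * M * (Matrix.of fun a b => ξ (a, b)) * Nᵀ).trace := by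
        simp only [Matrix.trace, Matrix.diag, Matrix.mul_apply, conjTranspose_apply,
          transpose_apply, of_apply, Finset.sum_mul, Finset.mul_sum]
        refine Finset.sum_congr rfl fun b _ => ?_
        refine Finset.sum_congr rfl fun b' _ => ?_
        refine Finset.sum_congr rfl fun a' _ => ?_
        refine Finset.sum_congr rfl fun a _ => by ring
end marginals

end AuxLemmas

/-- If the `Y`-marginal of a pure bipartite state `|ξ⟩` has fidelity at least `1-ε` with a fixed
pure state `|Φ⟩`, then `|ξ⟩⟨ξ|` has fidelity at least `(1-ε)³ ≥ 1-3ε` with the product of its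
marginals. -/
theorem fidelity_decoupling_of_marginal_fidelity {x y : Type*} [Fintype x] [DecidableEq x]
    [Fintype y] [DecidableEq y] (ξ : x × y → ℂ) (Φ : y → ℂ) (ε : ℝ)
    (hξ : ∑ p, star (ξ p) * ξ p = 1) (hΦ : ∑ b, star (Φ b) * Φ b = 1)
    (hε0 : 0 ≤ ε) (hε1 : ε ≤ 1)
    (hfid : fidelity (vecOuter Φ) (ptraceLeft (vecOuter ξ)) ≥ 1 - ε) :
    fidelity (vecOuter ξ) ((ptraceRight (vecOuter ξ)) ⊗ₖ (ptraceLeft (vecOuter ξ)))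
        ≥ (1 - ε) ^ 3 ∧ (1 - ε) ^ 3 ≥ 1 - 3 * ε := by
  classical
  set E : Matrix x y ℂ := Matrix.of fun a b => ξ (a, b) with hE
  set σX := ptraceRight (vecOuter ξ) with hσXdef
  set σY := ptraceLeft (vecOuter ξ) with hσYdef
  have hσX : σX = E * Eᴴ := ptraceRight_vecOuter ξ
  have hσY : σY = (Eᴴ * E)ᵀ := ptraceLeft_vecOuter ξ
  have hσXpsd : σX.PosSemidef := by
    rw [hσX]; exact posSemidef_self_mul_conjTranspose E
  have hσYpsd : σY.PosSemidef := by
    rw [hσY]; exact (posSemidef_conjTranspose_mul_self E).transpose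
  have hKpsd : (σX ⊗ₖ σY).PosSemidef := kron_posSemidef hσXpsd hσYpsd
  have hε' : (0:ℝ) ≤ 1 - ε := by linarith
  -- the Y-marginal quadratic form
  set t := (dotProduct (star Φ) (σY *ᵥ Φ)).re with htdef
  have ht0 : 0 ≤ t := hσYpsd.re_dotProduct_nonneg Φ
  have hfid1 : fidelity (vecOuter Φ) σY = Real.sqrt t :=
    fidelity_pure_left hΦ hσYpsd
  have ht2 : (1 - ε) ^ 2 ≤ t := by
    have h1 : 1 - ε ≤ Real.sqrt t := by rw [← hfid1]; exact hfid
    calc (1 - ε) ^ 2 ≤ Real.sqrt t ^ 2 := by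
          exact pow_le_pow_left₀ hε' h1 2
      _ = t := Real.sq_sqrt ht0
  -- the key identity
  have hkey : dotProduct (star ξ) ((σX ⊗ₖ σY) *ᵥ ξ) = (σY * σY * σY).trace := by
    rw [quadform_kron]
    have h1 : Eᴴ * σX * E * σYᵀ = (Eᴴ * E) * (Eᴴ * E) * (Eᴴ * E) := by
      rw [hσX, hσY, Matrix.transpose_transpose]
      simp only [← Matrix.mul_assoc]
    have h2 : σY * σY * σY = ((Eᴴ * E) * (Eᴴ * E) * (Eᴴ * E))ᵀ := by
      rw [hσY]
      simp only [Matrix.transpose_mul, Matrix.mul_assoc]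
    rw [h1, h2, Matrix.trace_transpose]
  have hbound : t ^ 3 ≤ ((σY * σY * σY).trace).re :=
    trace_cube_ge_quadform_cube hσYpsd hΦ
  have hfid2 : fidelity (vecOuter ξ) (σX ⊗ₖ σY)
      = Real.sqrt ((dotProduct (star ξ) ((σX ⊗ₖ σY) *ᵥ ξ)).re) :=
    fidelity_pure_left hξ hKpsd
  constructor
  · rw [hfid2, hkey]
    have h3 : ((1 - ε) ^ 3) ^ 2 ≤ ((σY * σY * σY).trace).re := by
      have h4 : ((1 - ε) ^ 2) ^ 3 ≤ t ^ 3 := pow_le_pow_left₀ (sq_nonneg _) ht2 3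
      calc ((1 - ε) ^ 3) ^ 2 = ((1 - ε) ^ 2) ^ 3 := by ring
        _ ≤ t ^ 3 := h4
        _ ≤ ((σY * σY * σY).trace).re := hbound
    calc (1 - ε) ^ 3 = Real.sqrt (((1 - ε) ^ 3) ^ 2) :=
          (Real.sqrt_sq (pow_nonneg hε' 3)).symm
      _ ≤ Real.sqrt (((σY * σY * σY).trace).re) := Real.sqrt_le_sqrt h3
  · nlinarith [sq_nonneg ε, mul_nonneg (mul_nonneg hε0 hε0) (by linarith : (0:ℝ) ≤ 3 - ε)]


end
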